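/- Let w ∈ S_n be such that w fixes {1,...,i-1} setwise, w(i) ≥ j, and w(j) = i, for some i < j ≤ n. Then for every r with i < r ≤ j, the transposition T_{i,r} is below w in Bruhat order. -/

import Mathlib

open Equiv

/-- Number of inversions (Coxeter length) of a permutation of ℕ. -/
noncomputable def invNum (w : Perm ℕ) : ℕ :=
  Set.ncard {p : ℕ × ℕ | p.1 < p.2 ∧ w p.2 < w p.1}

/-- Strong Bruhat order on (finitary) permutations of ℕ. -/
def BruhatLE (x y : Perm ℕ) : Prop :=
  Relation.ReflTransGen
    (fun u v => (∃ a b : ℕ, a < b ∧ v = u * Equiv.swap a b) ∧ invNum u < invNum v) x y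

def BruhatLT (x y : Perm ℕ) : Prop := BruhatLE x y ∧ x ≠ y

/-- w avoids the pattern 3412. -/
def Avoids3412 (w : Perm ℕ) : Prop :=
  ¬ ∃ a b c d : ℕ, a < b ∧ b < c ∧ c < d ∧ w c < w d ∧ w d < w a ∧ w a < w b

/-- w avoids the pattern 4231. -/
def Avoids4231 (w : Perm ℕ) : Prop :=
  ¬ ∃ a b c d : ℕ, a < b ∧ b < c ∧ c < d ∧ w d < w b ∧ w b < w c ∧ w c < w a

/-! ### Auxiliary machinery -/

/-- The inversion set of a permutation. -/
def InvSet (w : Perm ℕ) : Set (ℕ × ℕ) := {p : ℕ × ℕ | p.1 < p.2 ∧ w p.2 < w p.1}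

lemma invNum_eq_ncard_invSet (w : Perm ℕ) : invNum w = (InvSet w).ncard := rfl

lemma fix_lt (v : Perm ℕ) (N : ℕ) (h : ∀ k, N ≤ k → v k = k) {p : ℕ} (hp : p < N) :
    v p < N := by
  by_contra h'
  push_neg at h'
  have h2 : v (v p) = v p := h _ h'
  have h3 : v p = p := v.injective h2
  omega

lemma invSet_finite (v : Perm ℕ) (N : ℕ) (h : ∀ k, N ≤ k → v k = k) :
    (InvSet v).Finite := by
  apply Set.Finite.subset ((Set.finite_Iio N).prod (Set.finite_Iio N))
  rintro ⟨p, q⟩ ⟨h1, h2⟩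
  simp only [InvSet, Set.mem_setOf_eq] at h1 h2
  simp only [Set.mem_prod, Set.mem_Iio]
  by_cases hq : q < N
  · exact ⟨by omega, hq⟩
  · exfalso
    have hq' : v q = q := h q (by omega)
    by_cases hp : p < N
    · have := fix_lt v N h hp; omega
    · have hp' : v p = p := h p (by omega)
      omega

set_option linter.unreachableTactic false in
set_option linter.unusedTactic false in
/-- Right multiplication by a transposition corresponding to an inversion strictly
decreases the inversion number. -/
lemma invNum_mul_swap_lt (v : Perm ℕ) (a b N : ℕ) (hab : a < b) (hv : v b < v a)
    (hN : ∀ k, N ≤ k → v k = k) :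
    invNum (v * Equiv.swap a b) < invNum v := by
  classical
  rw [invNum_eq_ncard_invSet, invNum_eq_ncard_invSet]
  set g : ℕ × ℕ → ℕ × ℕ :=
    fun x => if (x.1 = a ∧ x.2 < b) ∨ (x.2 = b ∧ a < x.1) then x
             else (Equiv.swap a b x.1, Equiv.swap a b x.2) with hg
  have happ : ∀ x : ℕ, (v * Equiv.swap a b) x = v (Equiv.swap a b x) := fun x => rfl
  have hmaps : ∀ x ∈ InvSet (v * Equiv.swap a b), g x ∈ InvSet v \ {(a, b)} := by
    rintro ⟨p, q⟩ ⟨hpq, hinv⟩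
    simp only [InvSet, Set.mem_setOf_eq] at hpq hinv
    simp only [happ, Equiv.swap_apply_def] at hinv
    simp only [hg]
    split_ifs with hcond <;>
      simp only [InvSet, Set.mem_setOf_eq, Set.mem_diff, Set.mem_singleton_iff,
        Prod.mk.injEq, not_and, Equiv.swap_apply_def] <;>
      (try push_neg at hcond) <;>
      split_ifs at hinv ⊢ <;> first | omega | (subst_vars; omega)
  have hinvol : ∀ x : ℕ × ℕ, x.1 < x.2 → x ≠ (a, b) → g (g x) = x := by
    rintro ⟨p, q⟩ hpq hne
    simp only [ne_eq, Prod.mk.injEq, not_and] at hne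
    simp only [hg, Equiv.swap_apply_def, Prod.mk.injEq]
    split_ifs <;> first | omega | (simp_all; try omega) | simp_all
  have hninv : (a, b) ∉ InvSet (v * Equiv.swap a b) := by
    rintro ⟨-, hc⟩
    simp only [happ, Equiv.swap_apply_def] at hc
    split_ifs at hc <;> omega
  have hfin : (InvSet v).Finite := invSet_finite v N hN
  have hinj : Set.InjOn g (InvSet (v * Equiv.swap a b)) := by
    intro x hx y hy hxy
    have hxne : x ≠ (a, b) := fun h => hninv (h ▸ hx)
    have hyne : y ≠ (a, b) := fun h => hninv (h ▸ hy)
    calc x = g (g x) := (hinvol x hx.1 hxne).symm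
    _ = g (g y) := by rw [hxy]
    _ = y := hinvol y hy.1 hyne
  have hsub : g '' InvSet (v * Equiv.swap a b) ⊆ InvSet v \ {(a, b)} := by
    rintro y ⟨x, hx, rfl⟩; exact hmaps x hx
  have hmem : (a, b) ∈ InvSet v := ⟨hab, hv⟩
  calc (InvSet (v * Equiv.swap a b)).ncard
      = (g '' InvSet (v * Equiv.swap a b)).ncard := (Set.ncard_image_of_injOn hinj).symm
  _ ≤ (InvSet v \ {(a, b)}).ncard := Set.ncard_le_ncard hsub hfin.diff
  _ < (InvSet v).ncard := Set.ncard_diff_singleton_lt_of_mem hmem hfin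

/-- One downward Bruhat step. -/
lemma bruhat_step (t v : Perm ℕ) (a b N : ℕ) (hab : a < b) (hv : v b < v a)
    (hN : ∀ k, N ≤ k → v k = k)
    (h : BruhatLE t (v * Equiv.swap a b)) : BruhatLE t v := by
  refine h.tail ⟨⟨a, b, hab, ?_⟩, invNum_mul_swap_lt v a b N hab hv hN⟩
  rw [mul_assoc, Equiv.swap_mul_self, mul_one]

lemma finsupp_step (v : Perm ℕ) (a b N : ℕ) (hN : ∀ k, N ≤ k → v k = k) :
    ∀ k, max N (max a b + 1) ≤ k → (v * Equiv.swap a b) k = k := by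
  intro k hk
  have h1 : Equiv.swap a b k = k := by
    apply Equiv.swap_apply_of_ne_of_ne <;> omega
  show v (Equiv.swap a b k) = k
  rw [h1]; exact hN k (by omega)

/-- Main induction: a transposition criterion for the Bruhat order. -/
lemma bruhat_main (L : ℕ) : ∀ v : Perm ℕ, ∀ i r : ℕ, invNum v < L → i < r →
    (∃ N, ∀ k, N ≤ k → v k = k) →
    ((fun m => v m) '' {m | m < i} = {m | m < i}) →
    r ≤ v i → r ≤ v⁻¹ i →
    BruhatLE (Equiv.swap i r) v := by
  induction L with
  | zero => intro v i r h; omega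
  | succ L ih =>
    intro v i r hL hir ⟨N, hN⟩ hfix hvi hvinvi
    have f1 : ∀ m, m < i → v m < i := by
      intro m hm
      have : v m ∈ (fun m => v m) '' {m | m < i} := ⟨m, hm, rfl⟩
      rw [hfix] at this; exact this
    have f2 : ∀ m, m < i → v⁻¹ m < i := by
      intro m hm
      have : m ∈ (fun m => v m) '' {m | m < i} := by rw [hfix]; exact hm
      obtain ⟨m', hm', hvm'⟩ := this
      have : v⁻¹ m = m' := by rw [← hvm']; exact v.symm_apply_apply m'
      rw [this]; exact hm'
    have f3 : ∀ p, i ≤ p → i ≤ v p := by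
      intro p hp
      by_contra h'
      push_neg at h'
      have := f2 _ h'
      rw [Equiv.Perm.inv_def, v.symm_apply_apply] at this; omega
    set q := v⁻¹ i with hq
    have hvq : v q = i := v.apply_symm_apply i
    have hqi : i < q := by omega
    have imfixhi : ∀ a b : ℕ, i ≤ a → i ≤ b →
        ((fun m => (v * Equiv.swap a b) m) '' {m | m < i} = {m | m < i}) := by
      intro a b ha hb
      have heq : (fun m => (v * Equiv.swap a b) m) '' {m : ℕ | m < i}
          = (fun m => v m) '' {m | m < i} := by
        apply Set.image_congr
        intro m hm
        show v (Equiv.swap a b m) = v m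
        have hmi : m < i := hm
        rw [Equiv.swap_apply_of_ne_of_ne (by omega) (by omega)]
      rw [heq, hfix]
    by_cases hA : ∃ a b, a < b ∧ b < i ∧ v b < v a
    · obtain ⟨a, b, hab, hbi, hinvab⟩ := hA
      apply bruhat_step _ _ a b N hab hinvab hN
      refine ih _ i r (by have := invNum_mul_swap_lt v a b N hab hinvab hN; omega) hir
        ⟨max N (max a b + 1), finsupp_step v a b N hN⟩ ?_ ?_ ?_
      · have hswap : Equiv.swap a b '' {m : ℕ | m < i} = {m | m < i} := by
          apply Set.eq_of_subset_of_subset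
          · rintro x ⟨y, hy, rfl⟩
            simp only [Set.mem_setOf_eq] at *
            rw [Equiv.swap_apply_def]; split_ifs <;> omega
          · intro x hx
            refine ⟨Equiv.swap a b x, ?_, Equiv.swap_apply_self a b x⟩
            simp only [Set.mem_setOf_eq] at *
            rw [Equiv.swap_apply_def]; split_ifs <;> omega
        show (fun m => v (Equiv.swap a b m)) '' {m | m < i} = {m | m < i}
        rw [← Set.image_image (fun m => v m) (fun m => Equiv.swap a b m)]
        show v '' (Equiv.swap a b '' {m | m < i}) = {m | m < i}
        rw [hswap]
        exact hfix
      · show r ≤ v (Equiv.swap a b i)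
        rw [Equiv.swap_apply_of_ne_of_ne (by omega) (by omega)]
        exact hvi
      · have : (v * Equiv.swap a b)⁻¹ i = Equiv.swap a b (v⁻¹ i) := by
          rw [mul_inv_rev, Equiv.swap_inv]
          rfl
        rw [this, ← hq, Equiv.swap_apply_of_ne_of_ne (by omega) (by omega)]
        exact hvinvi
    · have hpt : ∀ m, m < i → v m = m := by
        intro m
        induction m using Nat.strong_induction_on with
        | _ m IH =>
          intro hm
          have h1 : v m < i := f1 m hm
          rcases lt_trichotomy (v m) m with h | h | h
          · have h2 := IH (v m) h (by omega)
            have := v.injective h2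
            omega
          · exact h
          · exfalso
            have hd : v (v⁻¹ m) = m := v.apply_symm_apply m
            have hdi : v⁻¹ m < i := f2 m hm
            rcases lt_trichotomy (v⁻¹ m) m with h' | h' | h'
            · have := IH (v⁻¹ m) h' (by omega)
              rw [this] at hd; omega
            · rw [h'] at hd; omega
            · exact hA ⟨m, v⁻¹ m, h', hdi, by rw [hd]; omega⟩
      by_cases hC : r < q
      · have hvr : i < v r := by
          have h1 := f3 r (by omega)
          rcases h1.lt_or_eq with h | h
          · exact h
          · exfalso
            have : r = q := by
              rw [hq, h, Equiv.Perm.inv_def, v.symm_apply_apply]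
            omega
        have hinvrq : v q < v r := by rw [hvq]; exact hvr
        apply bruhat_step _ _ r q N (by omega) hinvrq hN
        refine ih _ i r (by have := invNum_mul_swap_lt v r q N (by omega) hinvrq hN; omega) hir
          ⟨max N (max r q + 1), finsupp_step v r q N hN⟩
          (imfixhi r q (by omega) (by omega)) ?_ ?_
        · show r ≤ v (Equiv.swap r q i)
          rw [Equiv.swap_apply_of_ne_of_ne (by omega) (by omega)]
          exact hvi
        · have : (v * Equiv.swap r q)⁻¹ i = Equiv.swap r q (v⁻¹ i) := by
            rw [mul_inv_rev, Equiv.swap_inv]; rfl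
          rw [this, ← hq, Equiv.swap_apply_right]
      · have hqr : q = r := by omega
        by_cases hB : r < v i
        · set p := v⁻¹ r with hp
          have hvp : v p = r := v.apply_symm_apply r
          have hpi : i < p := by
            rcases lt_trichotomy p i with h | h | h
            · exfalso; have := hpt p h; rw [this] at hvp; omega
            · exfalso; rw [h] at hvp; omega
            · exact h
          have hpq : p ≠ q := by
            intro h; rw [h, hvq] at hvp; omega
          have hinvip : v p < v i := by rw [hvp]; exact hB
          apply bruhat_step _ _ i p N hpi hinvip hN
          refine ih _ i r (by have := invNum_mul_swap_lt v i p N hpi hinvip hN; omega) hir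
            ⟨max N (max i p + 1), finsupp_step v i p N hN⟩
            (imfixhi i p (by omega) (by omega)) ?_ ?_
          · show r ≤ v (Equiv.swap i p i)
            rw [Equiv.swap_apply_left, hvp]
          · have : (v * Equiv.swap i p)⁻¹ i = Equiv.swap i p (v⁻¹ i) := by
              rw [mul_inv_rev, Equiv.swap_inv]; rfl
            rw [this, ← hq, Equiv.swap_apply_of_ne_of_ne (by omega) (by omega)]
            omega
        · have hvir : v i = r := by omega
          by_cases hD : ∃ c d, i < c ∧ c < d ∧ c ≠ r ∧ d ≠ r ∧ v d < v c
          · obtain ⟨c, d, hic, hcd, hcr, hdr, hinvcd⟩ := hD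
            apply bruhat_step _ _ c d N hcd hinvcd hN
            refine ih _ i r (by have := invNum_mul_swap_lt v c d N hcd hinvcd hN; omega) hir
              ⟨max N (max c d + 1), finsupp_step v c d N hN⟩
              (imfixhi c d (by omega) (by omega)) ?_ ?_
            · show r ≤ v (Equiv.swap c d i)
              rw [Equiv.swap_apply_of_ne_of_ne (by omega) (by omega)]
              exact hvi
            · have : (v * Equiv.swap c d)⁻¹ i = Equiv.swap c d (v⁻¹ i) := by
                rw [mul_inv_rev, Equiv.swap_inv]; rfl
              rw [this, ← hq, Equiv.swap_apply_of_ne_of_ne (by omega) (by omega)]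
              omega
          · have hC2 : ∀ x, i < x → x ≠ r → v x = x := by
              intro x
              induction x using Nat.strong_induction_on with
              | _ x IH =>
                intro hx hxr
                have hvx1 : i ≤ v x := f3 x (by omega)
                have hvx2 : v x ≠ i := by
                  intro h
                  have : x = q := by rw [hq, ← h, Equiv.Perm.inv_def, v.symm_apply_apply]
                  omega
                have hvx3 : v x ≠ r := by
                  intro h
                  rw [← hvir] at h
                  have := v.injective h
                  omega
                rcases lt_trichotomy (v x) x with h | h | h
                · have h2 := IH (v x) h (by omega) hvx3
                  have := v.injective h2
                  omega
                · exact h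
                · exfalso
                  set d := v⁻¹ x with hd
                  have hvd : v d = x := v.apply_symm_apply x
                  have hdi : i < d := by
                    rcases lt_trichotomy d i with h' | h' | h'
                    · exfalso; have := hpt d h'; rw [this] at hvd; omega
                    · exfalso; rw [h', hvir] at hvd; omega
                    · exact h'
                  have hdr : d ≠ r := by
                    intro h'
                    rw [h'] at hvd
                    rw [← hqr, hvq] at hvd
                    omega
                  rcases lt_trichotomy d x with h' | h' | h'
                  · have := IH d h' hdi hdr
                    rw [this] at hvd; omega
                  · rw [h'] at hvd; omega
                  · exact hD ⟨x, d, hx, h', hxr, hdr, by rw [hvd]; omega⟩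
            have hvswap : v = Equiv.swap i r := by
              ext x
              rcases lt_trichotomy x i with h | h | h
              · rw [hpt x h, Equiv.swap_apply_of_ne_of_ne (by omega) (by omega)]
              · rw [h, hvir, Equiv.swap_apply_left]
              · by_cases hxr : x = r
                · rw [hxr, ← hqr, hvq, Equiv.swap_apply_right]
                · rw [hC2 x h hxr, Equiv.swap_apply_of_ne_of_ne (by omega) (by omega)]
            rw [hvswap]
            exact Relation.ReflTransGen.refl

/-- With wedge data (i,j) for w, each transposition T_{i,r} with i < r ≤ j
lies below w in Bruhat order. -/
theorem stmt14 (n : ℕ) (w : Perm ℕ) (hw : ∀ k, n ≤ k → w k = k)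
    (i j : ℕ) (hij : i < j) (hjn : j < n)
    (hfix : (fun m => w m) '' {m | m < i} = {m | m < i})
    (hwi : j ≤ w i) (hwj : w j = i) :
    ∀ r, i < r → r ≤ j → BruhatLE (Equiv.swap i r) w := by
  intro r hir hrj
  have hwinv : w⁻¹ i = j := by rw [← hwj, Equiv.Perm.inv_def, w.symm_apply_apply]
  exact bruhat_main (invNum w + 1) w i r (by omega) hir ⟨n, fun k hk => hw k hk⟩ hfix
    (le_trans hrj hwi) (by rw [hwinv]; exact hrj)
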